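/- For α > 2, θ > 0, h > 0, and λ > 0, the function F(λ) = λ·exp(-πλh²·ψ(θ)) satisfies F(λ) ≤ 1/(e·πh²·ψ(θ)) for all λ > 0 with equality iff λ = 1/(πh²ψ(θ)), and lim_{λ→∞} F(λ) = 0; hence the ASE λ·P_cov^C(θ,λ)·log₂(1+θ) decays to zero as the BS density grows large. -/

import Mathlib

open Real Filter Topology

lemma xexp_le (x : ℝ) : x * Real.exp (-x) ≤ Real.exp (-1) := by
  have h1 : x ≤ Real.exp (x - 1) := by
    have := Real.add_one_le_exp (x - 1)
    linarith
  calc x * Real.exp (-x) ≤ Real.exp (x - 1) * Real.exp (-x) := by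
        exact mul_le_mul_of_nonneg_right h1 (Real.exp_pos _).le
    _ = Real.exp (-1) := by rw [← Real.exp_add]; ring_nf

lemma xexp_eq_iff (x : ℝ) : x * Real.exp (-x) = Real.exp (-1) ↔ x = 1 := by
  constructor
  · intro hEq
    by_contra hx
    have h1 : x < Real.exp (x - 1) := by
      have := Real.add_one_lt_exp (x := x - 1) (by intro h; apply hx; linarith)
      linarith
    have : x * Real.exp (-x) < Real.exp (x - 1) * Real.exp (-x) :=
      mul_lt_mul_of_pos_right h1 (Real.exp_pos _)
    rw [← Real.exp_add] at this
    have : x * Real.exp (-x) < Real.exp (-1) := by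
      convert this using 2; ring
    linarith [hEq]
  · rintro rfl; norm_num

theorem ase_decays_to_zero (α θ h ψθ : ℝ) (hα : 2 < α) (hθ : 0 < θ) (hh : 0 < h)
    (hψ : 0 < ψθ) :
    let F : ℝ → ℝ := fun lam => lam * Real.exp (-(π * lam * h ^ 2 * ψθ))
    (∀ lam : ℝ, 0 < lam →
        (F lam ≤ 1 / (Real.exp 1 * π * h ^ 2 * ψθ) ∧
          (F lam = 1 / (Real.exp 1 * π * h ^ 2 * ψθ) ↔ lam = 1 / (π * h ^ 2 * ψθ)))) ∧
      Tendsto F atTop (nhds 0) := by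
  intro F
  have hc : 0 < π * h ^ 2 * ψθ := by positivity
  set c := π * h ^ 2 * ψθ with hcdef
  have hF : ∀ lam, F lam = (c * lam) * Real.exp (-(c * lam)) / c := by
    intro lam
    field_simp [F]
    simp only [F, hcdef]
    ring_nf
  constructor
  · intro lam hlam
    have hbound : F lam ≤ 1 / (Real.exp 1 * c) := by
      rw [hF lam, div_le_div_iff₀ hc (by positivity)]
      have := xexp_le (c * lam)
      calc c * lam * Real.exp (-(c * lam)) * (Real.exp 1 * c)
          ≤ Real.exp (-1) * (Real.exp 1 * c) := by
            exact mul_le_mul_of_nonneg_right this (by positivity)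
        _ = 1 * c := by rw [← mul_assoc, ← Real.exp_add]; norm_num
    have hrw : 1 / (Real.exp 1 * π * h ^ 2 * ψθ) = 1 / (Real.exp 1 * c) := by
      rw [hcdef]; ring_nf
    constructor
    · rw [hrw]; exact hbound
    · rw [hrw]
      constructor
      · intro hEq
        rw [hF lam] at hEq
        have hEq2 : (c * lam) * Real.exp (-(c * lam)) = Real.exp (-1) := by
          have h1 : (c * lam) * Real.exp (-(c * lam)) = c / (Real.exp 1 * c) := by
            field_simp at hEq ⊢
            linarith [hEq]
          rw [h1]
          rw [Real.exp_neg]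
          field_simp
        have := (xexp_eq_iff (c * lam)).mp hEq2
        have : lam = 1 / c := by field_simp; linarith
        rw [this, hcdef]
      · intro hEq
        have hl : c * lam = 1 := by
          rw [hEq, hcdef]; field_simp
        rw [hF lam, hl]
        rw [Real.exp_neg]
        field_simp
  · have h1 : Tendsto (fun lam : ℝ => c * lam) atTop atTop :=
      tendsto_id.const_mul_atTop hc
    have h2 : Tendsto (fun y : ℝ => y * Real.exp (-y)) atTop (nhds 0) := by
      have := Real.tendsto_pow_mul_exp_neg_atTop_nhds_zero 1
      simpa using this
    have h3 : Tendsto (fun lam : ℝ => (c * lam) * Real.exp (-(c * lam))) atTop (nhds 0) :=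
      h2.comp h1
    have h4 := h3.div_const c
    simp only [zero_div] at h4
    convert h4 using 1
    funext lam
    exact hF lam
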